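/- arXiv:2507.02736 — 6 statements merged into one kernel-verified Lean document; each statement's English description precedes it below -/
import Mathlib

section
/- (Floquet–Lyapunov theorem) Let T > 0, let H : ℝ → Matrix (Fin n) (Fin n) ℝ be continuous and T-periodic, and let U : ℝ → Matrix (Fin n) (Fin n) ℝ satisfy U(0) = 1, U'(t) = H(t) * U(t) for all t, with U(t) invertible for every t. Suppose H̃ is a matrix with Matrix.exp (T • H̃) = U(T). Then the function P(t) := U(t) * Matrix.exp (−t • H̃) is T-periodic, i.e. P(t+T) = P(t) for all t; in particular U(t) = P(t) * Matrix.exp (t • H̃) for all t with P being T-periodic. -/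
attribute [local instance] Matrix.linftyOpNormedRing Matrix.linftyOpNormedAlgebra

open NormedSpace

/-- **Floquet–Lyapunov theorem.** If `H` is continuous and `T`-periodic, `U` is the
propagator of `x' = H(t) x` with `U t` invertible for all `t`, and `H̃` is a Floquet
Hamiltonian, i.e. `exp (T • H̃) = U T`, then `P t := U t * exp (-(t • H̃))` is
`T`-periodic and `U t = P t * exp (t • H̃)` for all `t`. -/
theorem floquet_lyapunov (n : ℕ) (T : ℝ) (hT : 0 < T)
    (H U : ℝ → Matrix (Fin n) (Fin n) ℝ)
    (hHcont : Continuous H)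
    (hHper : ∀ t, H (t + T) = H t)
    (hU0 : U 0 = 1)
    (hU : ∀ t, HasDerivAt U (H t * U t) t)
    (hUinv : ∀ t, IsUnit (U t))
    (Htilde : Matrix (Fin n) (Fin n) ℝ)
    (hFloq : exp (T • Htilde) = U T) :
    (∀ t, U (t + T) * exp (-((t + T) • Htilde)) = U t * exp (-(t • Htilde))) ∧
      (∀ t, U t = (U t * exp (-(t • Htilde))) * exp (t • Htilde)) := by
  -- exp(-A) * exp(A) = 1
  have hexp_inv : ∀ A : Matrix (Fin n) (Fin n) ℝ, exp (-A) * exp A = 1 := by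
    intro A
    rw [← Matrix.exp_add_of_commute _ _ (Commute.neg_left (Commute.refl A)), neg_add_cancel, exp_zero]
  have hexp_inv' : ∀ A : Matrix (Fin n) (Fin n) ℝ, exp A * exp (-A) = 1 := by
    intro A
    rw [← Matrix.exp_add_of_commute _ _ (Commute.neg_right (Commute.refl A)), add_neg_cancel, exp_zero]
  -- the inverse function V t := Ring.inverse (U t)
  set V : ℝ → Matrix (Fin n) (Fin n) ℝ := fun t => Ring.inverse (U t) with hV
  have hVU : ∀ t, V t * U t = 1 := fun t => Ring.inverse_mul_cancel _ (hUinv t)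
  have hUV : ∀ t, U t * V t = 1 := fun t => Ring.mul_inverse_cancel _ (hUinv t)
  have hVderiv : ∀ t, HasDerivAt V (-(V t * (H t * U t) * V t)) t := by
    intro t
    obtain ⟨u, hu⟩ := hUinv t
    have h1 := (hasFDerivAt_ringInverse (𝕜 := ℝ) u)
    rw [hu] at h1
    have h2 := h1.comp_hasDerivAt t (hU t)
    refine h2.congr_deriv ?_
    simp [hV, ← hu, Ring.inverse_unit u]
  -- the function G t := V t * U (t + T) has zero derivative
  have hGderiv : ∀ t, HasDerivAt (fun t => V t * U (t + T)) 0 t := by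
    intro t
    have hshift : HasDerivAt (fun t => U (t + T)) (H t * U (t + T)) t := by
      have h0 : HasDerivAt (fun x : ℝ => x + T) 1 t := (hasDerivAt_id t).add_const T
      have := (hU (t + T)).scomp t h0
      simp only [hHper t, one_smul] at this
      exact this
    have := (hVderiv t).mul hshift
    refine this.congr_deriv ?_
    have h1 : V t * (H t * U t) * V t = V t * H t := by
      rw [mul_assoc, mul_assoc, hUV, mul_one]
    rw [h1, neg_mul, mul_assoc, neg_add_cancel]
  have hGconst : ∀ t, V t * U (t + T) = U T := by
    intro t
    have hdiff : Differentiable ℝ (fun t => V t * U (t + T)) :=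
      fun t => (hGderiv t).differentiableAt
    have hzero : ∀ t, deriv (fun t => V t * U (t + T)) t = 0 :=
      fun t => (hGderiv t).deriv
    have := is_const_of_deriv_eq_zero hdiff hzero t 0
    simpa [hV, hU0, Ring.inverse_one] using this
  have hUshift : ∀ t, U (t + T) = U t * U T := by
    intro t
    calc U (t + T) = U t * (V t * U (t + T)) := by rw [← mul_assoc, hUV, one_mul]
    _ = U t * U T := by rw [hGconst]
  constructor
  · intro t
    have hcomm : Commute (-(t • Htilde)) (-(T • Htilde)) := by
      apply Commute.neg_left; apply Commute.neg_right
      exact (Commute.refl Htilde).smul_left t |>.smul_right T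
    have hsplit : exp (-((t + T) • Htilde)) =
        exp (-(T • Htilde)) * exp (-(t • Htilde)) := by
      rw [← Matrix.exp_add_of_commute _ _ hcomm.symm]
      congr 1
      rw [add_smul]; abel
    rw [hUshift t, hsplit, ← mul_assoc, mul_assoc (U t), ← hFloq, hexp_inv', mul_one]
  · intro t
    rw [mul_assoc, hexp_inv, mul_one]
end

section
/- Let A : Matrix (Fin n) (Fin n) ℂ. Then ‖Matrix.exp (t • A)‖ tends to 0 as t → ∞ along the reals if and only if every eigenvalue λ in the spectrum of A satisfies Re λ < 0. -/
attribute [local instance] Matrix.linftyOpNormedRing Matrix.linftyOpNormedAlgebra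

open NormedSpace

namespace StabAux

open Filter Matrix Nat Real

variable {n : ℕ}

/-- `M ↦ M *ᵥ v` as a continuous linear map. -/
noncomputable def mulVecCLM (v : Fin n → ℂ) :
    Matrix (Fin n) (Fin n) ℂ →L[ℂ] (Fin n → ℂ) :=
  LinearMap.toContinuousLinearMap
    { toFun := fun M => M *ᵥ v
      map_add' := fun M N => Matrix.add_mulVec M N v
      map_smul' := fun c M => Matrix.smul_mulVec c M v }

@[simp] lemma mulVecCLM_apply (v : Fin n → ℂ) (M : Matrix (Fin n) (Fin n) ℂ) :
    mulVecCLM v M = M *ᵥ v := rfl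

lemma exp_mulVec (M : Matrix (Fin n) (Fin n) ℂ) (v : Fin n → ℂ) :
    exp M *ᵥ v = ∑' m : ℕ, (m !⁻¹ : ℂ) • (M ^ m *ᵥ v) := by
  have hs := expSeries_summable' (𝕂 := ℂ) M
  have h := (mulVecCLM v).map_tsum hs
  rw [exp_eq_tsum ℂ]
  refine h.trans (tsum_congr fun m => ?_)
  rw [mulVecCLM_apply, Matrix.smul_mulVec]

lemma real_smul_matrix (t : ℝ) (M : Matrix (Fin n) (Fin n) ℂ) :
    t • M = (t : ℂ) • M := by
  ext i j
  simp [Matrix.smul_apply, Complex.real_smul]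

lemma poly_exp_tendsto (c : ℝ) (hc : c < 0) (m : ℕ) :
    Filter.Tendsto (fun t : ℝ => t ^ m * Real.exp (c * t)) atTop (nhds 0) := by
  have h1 : Filter.Tendsto (fun t : ℝ => -c * t) atTop atTop :=
    Filter.Tendsto.const_mul_atTop (by linarith) tendsto_id
  have h2 := (Real.tendsto_pow_mul_exp_neg_atTop_nhds_zero m).comp h1
  have h3 := h2.const_mul (((-c)⁻¹) ^ m)
  rw [mul_zero] at h3
  refine h3.congr fun t => ?_
  have hc0 : (-c) ≠ 0 := by linarith
  simp only [Function.comp_apply, neg_neg]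
  rw [mul_comm, mul_assoc, mul_comm (Real.exp _), ← mul_assoc, mul_pow, mul_comm ((-c)^m),
    mul_assoc ((t:ℝ)^m), ← mul_pow, mul_inv_cancel₀ hc0, one_pow, mul_one]
  congr 1
  ring_nf

lemma scalar_term_tendsto (μ : ℂ) (hμ : μ.re < 0) (m : ℕ) :
    Filter.Tendsto (fun t : ℝ => Complex.exp ((t : ℂ) * μ) * (t : ℂ) ^ m) atTop (nhds 0) := by
  rw [tendsto_zero_iff_norm_tendsto_zero]
  have key := poly_exp_tendsto μ.re hμ m
  refine key.congr' ?_
  filter_upwards [eventually_ge_atTop (0 : ℝ)] with t ht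
  rw [norm_mul, norm_pow, Complex.norm_exp,
    Complex.norm_real, Real.norm_eq_abs, abs_of_nonneg ht]
  have : ((t : ℂ) * μ).re = t * μ.re := by
    simp [Complex.mul_re]
  rw [this, mul_comm t μ.re, mul_comm]

lemma tendsto_exp_mulVec_of_gen (A : Matrix (Fin n) (Fin n) ℂ) (μ : ℂ) (hμ : μ.re < 0)
    (k : ℕ) (v : Fin n → ℂ)
    (hv : ((A - μ • (1 : Matrix (Fin n) (Fin n) ℂ)) ^ k) *ᵥ v = 0) :
    Filter.Tendsto (fun t : ℝ => exp (t • A) *ᵥ v) atTop (nhds 0) := by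
  set N : Matrix (Fin n) (Fin n) ℂ := A - μ • 1 with hNdef
  have hcomm : ∀ t : ℝ, Commute (((t : ℂ) * μ) • (1 : Matrix (Fin n) (Fin n) ℂ))
      ((t : ℂ) • N) := fun t => ((Commute.one_left N).smul_left _).smul_right _
  have hsplit : ∀ t : ℝ,
      exp (t • A) = Complex.exp ((t : ℂ) * μ) • exp ((t : ℂ) • N) := by
    intro t
    rw [Complex.exp_eq_exp_ℂ]
    have h1 : t • A = ((t : ℂ) * μ) • (1 : Matrix (Fin n) (Fin n) ℂ) + (t : ℂ) • N := by
      rw [real_smul_matrix, hNdef, smul_sub, smul_smul]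
      abel
    rw [h1, Matrix.exp_add_of_commute _ _ (hcomm t)]
    rw [show (((t : ℂ) * μ) • (1 : Matrix (Fin n) (Fin n) ℂ)) = algebraMap ℂ _ ((t : ℂ) * μ)
        from (Algebra.algebraMap_eq_smul_one _).symm]
    erw [← algebraMap_exp_comm]
    rw [Algebra.algebraMap_eq_smul_one, smul_mul_assoc, one_mul]
  have hfin : ∀ t : ℝ, exp ((t : ℂ) • N) *ᵥ v
      = ∑ m ∈ Finset.range k, ((t : ℂ) ^ m * ((m ! : ℂ))⁻¹) • (N ^ m *ᵥ v) := by
    intro t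
    rw [exp_mulVec]
    have hterm : ∀ m : ℕ, ((m ! : ℂ))⁻¹ • (((t : ℂ) • N) ^ m *ᵥ v)
        = ((t : ℂ) ^ m * ((m ! : ℂ))⁻¹) • (N ^ m *ᵥ v) := by
      intro m
      rw [smul_pow, Matrix.smul_mulVec, smul_smul, mul_comm]
    simp_rw [hterm]
    refine tsum_eq_sum fun m hm => ?_
    have hge : k ≤ m := by simpa using hm
    have hz : N ^ m *ᵥ v = 0 := by
      have hp : N ^ m = N ^ (m - k) * N ^ k := by rw [← pow_add]; congr 1; omega
      rw [hp, ← Matrix.mulVec_mulVec, hv, Matrix.mulVec_zero]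
    rw [hz, smul_zero]
  have heq : ∀ t : ℝ, exp (t • A) *ᵥ v
      = ∑ m ∈ Finset.range k,
        (Complex.exp ((t : ℂ) * μ) * (t : ℂ) ^ m * ((m ! : ℂ))⁻¹) • (N ^ m *ᵥ v) := by
    intro t
    rw [hsplit, Matrix.smul_mulVec, hfin, Finset.smul_sum]
    refine Finset.sum_congr rfl fun m _ => ?_
    rw [smul_smul, ← mul_assoc]
  have hlim : Filter.Tendsto (fun t : ℝ => ∑ m ∈ Finset.range k,
      (Complex.exp ((t : ℂ) * μ) * (t : ℂ) ^ m * ((m ! : ℂ))⁻¹) • (N ^ m *ᵥ v))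
      atTop (nhds 0) := by
    have h0 : (0 : Fin n → ℂ) = ∑ _m ∈ Finset.range k, (0 : Fin n → ℂ) := by simp
    rw [h0]
    refine tendsto_finset_sum _ fun m _ => ?_
    have h := ((scalar_term_tendsto μ hμ m).mul_const (((m ! : ℂ))⁻¹)).smul_const (N ^ m *ᵥ v)
    simpa using h
  exact hlim.congr fun t => (heq t).symm

lemma tendsto_exp_mulVec (A : Matrix (Fin n) (Fin n) ℂ)
    (h : ∀ μ ∈ spectrum ℂ A, μ.re < 0) (v : Fin n → ℂ) :
    Filter.Tendsto (fun t : ℝ => exp (t • A) *ᵥ v) atTop (nhds 0) := by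
  have htop := Module.End.iSup_maxGenEigenspace_eq_top (Matrix.toLinAlgEquiv' A)
  have hv : v ∈ ⨆ μ : ℂ, Module.End.maxGenEigenspace (Matrix.toLinAlgEquiv' A) μ := by
    rw [htop]; trivial
  refine Submodule.iSup_induction (motive := fun w =>
      Filter.Tendsto (fun t : ℝ => exp (t • A) *ᵥ w) atTop (nhds 0)) _ hv ?_ ?_ ?_
  · intro μ w hw
    rcases eq_or_ne w 0 with rfl | hw0
    · simpa [Matrix.mulVec_zero] using (tendsto_const_nhds :
        Filter.Tendsto (fun _ : ℝ => (0 : Fin n → ℂ)) atTop (nhds 0))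
    obtain ⟨k, hk⟩ := (Module.End.mem_maxGenEigenspace _ _ _).mp hw
    have hmem : w ∈ Module.End.genEigenspace (Matrix.toLinAlgEquiv' A) μ k :=
      (Module.End.mem_genEigenspace).mpr ⟨k, le_rfl, by simpa [LinearMap.mem_ker] using hk⟩
    have hgen : Module.End.HasGenEigenvalue (Matrix.toLinAlgEquiv' A) μ k := by
      intro hbot
      exact hw0 (by simpa [hbot] using hmem)
    have hspec : μ ∈ spectrum ℂ A := by
      rw [← AlgEquiv.spectrum_eq (Matrix.toLinAlgEquiv' (R := ℂ) (n := Fin n)) A]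
      exact Module.End.hasEigenvalue_iff_mem_spectrum.mp
        (Module.End.hasEigenvalue_of_hasGenEigenvalue hgen)
    have e : Matrix.toLinAlgEquiv' ((A - μ • (1 : Matrix (Fin n) (Fin n) ℂ)) ^ k)
        = ((Matrix.toLinAlgEquiv' A) - μ • 1) ^ k := by
      rw [map_pow, map_sub, _root_.map_smul, _root_.map_one]
    have hkM : ((A - μ • (1 : Matrix (Fin n) (Fin n) ℂ)) ^ k) *ᵥ w = 0 := by
      rw [← Matrix.toLinAlgEquiv'_apply, e]
      exact hk
    exact tendsto_exp_mulVec_of_gen A μ (h μ hspec) k w hkM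
  · simpa [Matrix.mulVec_zero] using (tendsto_const_nhds :
      Filter.Tendsto (fun _ : ℝ => (0 : Fin n → ℂ)) atTop (nhds 0))
  · intro x y hx hy
    have hxy := hx.add hy
    rw [add_zero] at hxy
    exact hxy.congr fun t => (Matrix.mulVec_add _ _ _).symm

lemma norm_le_sum_cols (M : Matrix (Fin n) (Fin n) ℂ) :
    ‖M‖ ≤ ∑ j : Fin n, ‖M *ᵥ Pi.single j 1‖ := by
  have h : ‖M‖₊ ≤ ∑ j : Fin n, ‖M *ᵥ Pi.single j 1‖₊ := by
    rw [Matrix.linfty_opNNNorm_def]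
    refine Finset.sup_le fun i _ => Finset.sum_le_sum fun j _ => ?_
    have h1 : M i j = (M *ᵥ Pi.single j 1) i := by simp [Matrix.mulVec_single]
    rw [h1]
    exact nnnorm_le_pi_nnnorm _ i
  calc ‖M‖ = (‖M‖₊ : ℝ) := (coe_nnnorm _).symm
    _ ≤ ((∑ j : Fin n, ‖M *ᵥ Pi.single j 1‖₊ : NNReal) : ℝ) := NNReal.coe_le_coe.mpr h
    _ = ∑ j : Fin n, ‖M *ᵥ Pi.single j 1‖ := by push_cast; rfl

end StabAux

open StabAux Filter Nat Matrix

/-- Stability criterion: `‖exp (t • A)‖ → 0` as `t → ∞` if and only if every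
eigenvalue of `A` has negative real part. -/
theorem matrix_exp_tendsto_zero_iff_spectrum_re_neg (n : ℕ)
    (A : Matrix (Fin n) (Fin n) ℂ) :
    Filter.Tendsto (fun t : ℝ => ‖exp (t • A)‖) Filter.atTop (nhds 0) ↔
      ∀ μ ∈ spectrum ℂ A, μ.re < 0 := by
  constructor
  · intro h μ hμ
    have hμ' : μ ∈ spectrum ℂ (Matrix.toLinAlgEquiv' A) := by
      rw [AlgEquiv.spectrum_eq]; exact hμ
    obtain ⟨v, hv⟩ := (Module.End.hasEigenvalue_iff_mem_spectrum.mpr hμ').exists_hasEigenvector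
    have hv0 : (0 : ℝ) < ‖v‖ := norm_pos_iff.mpr hv.right
    have hAv : A *ᵥ v = μ • v := by
      have := hv.apply_eq_smul
      simpa [Matrix.toLinAlgEquiv'_apply] using this
    have hpow : ∀ m : ℕ, A ^ m *ᵥ v = μ ^ m • v := by
      intro m
      induction m with
      | zero => simp [Matrix.one_mulVec]
      | succ m ih =>
        have h1 : A ^ (m + 1) = A * A ^ m := pow_succ' A m
        rw [h1, ← Matrix.mulVec_mulVec, ih, Matrix.mulVec_smul, hAv, smul_smul,
          ← pow_succ]
    have hexp : ∀ t : ℝ, exp (t • A) *ᵥ v = Complex.exp ((t : ℂ) * μ) • v := by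
      intro t
      rw [real_smul_matrix, exp_mulVec]
      have hterm : ∀ m : ℕ, ((m ! : ℂ))⁻¹ • (((t : ℂ) • A) ^ m *ᵥ v)
          = (((m ! : ℂ))⁻¹ • ((t : ℂ) * μ) ^ m) • v := by
        intro m
        rw [smul_pow, Matrix.smul_mulVec, hpow, smul_smul, smul_eq_mul, smul_smul, mul_pow,
          mul_assoc]
      simp_rw [hterm]
      rw [(expSeries_summable' (𝕂 := ℂ) ((t : ℂ) * μ)).tsum_smul_const]
      congr 1
      rw [Complex.exp_eq_exp_ℂ, exp_eq_tsum ℂ]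
    have hb : ∀ t : ℝ, Real.exp (t * μ.re) ≤ ‖exp (t • A)‖ := by
      intro t
      have h1 : ‖exp (t • A) *ᵥ v‖ ≤ ‖exp (t • A)‖ * ‖v‖ :=
        Matrix.linfty_opNorm_mulVec _ _
      rw [hexp t, norm_smul, Complex.norm_exp] at h1
      have h2 : ((t : ℂ) * μ).re = t * μ.re := by simp [Complex.mul_re]
      rw [h2] at h1
      exact le_of_mul_le_mul_right h1 hv0
    by_contra hre
    have h1 : Filter.Tendsto (fun t : ℝ => Real.exp (t * μ.re)) Filter.atTop (nhds 0) :=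
      squeeze_zero (fun t => (Real.exp_pos _).le) hb h
    have h2 : ∀ t : ℝ, 0 ≤ t → 1 ≤ Real.exp (t * μ.re) := fun t ht =>
      Real.one_le_exp (mul_nonneg ht (not_lt.mp hre))
    have h3 := ge_of_tendsto h1 (Filter.eventually_atTop.mpr ⟨0, h2⟩)
    linarith
  · intro h
    have H := tendsto_exp_mulVec A h
    refine squeeze_zero (fun t => norm_nonneg _) (fun t => norm_le_sum_cols _) ?_
    have h0 : (0 : ℝ) = ∑ _j : Fin n, (0 : ℝ) := by simp
    rw [h0]
    exact tendsto_finset_sum _ fun j _ =>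
      tendsto_zero_iff_norm_tendsto_zero.mp (H (Pi.single j 1))
end

section
/- Let H : ℝ → Matrix (Fin n) (Fin n) ℝ be continuous and suppose H(s) * H(s') = H(s') * H(s) for all s, s' ∈ ℝ. Define the Dyson terms recursively by U⁽⁰⁾(t) = 1 and U⁽ᵏ⁺¹⁾(t) = ∫₀ᵗ H(s) * U⁽ᵏ⁾(s) ds. Then for every k ≥ 0 and every t, U⁽ᵏ⁾(t) = (1/k!) * (∫₀ᵗ H(s) ds)^k. -/
attribute [local instance] Matrix.linftyOpNormedRing Matrix.linftyOpNormedAlgebra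

/-- The Dyson terms: `U⁽⁰⁾ = 1` and `U⁽ᵏ⁺¹⁾(t) = ∫₀ᵗ H(s) * U⁽ᵏ⁾(s) ds`. -/
noncomputable def dysonTerm {n : ℕ} (H : ℝ → Matrix (Fin n) (Fin n) ℝ) :
    ℕ → ℝ → Matrix (Fin n) (Fin n) ℝ
  | 0 => fun _ => 1
  | k + 1 => fun t => ∫ s in (0:ℝ)..t, H s * dysonTerm H k s

/-- For a continuous matrix function commuting with itself at all times, the `k`-th
Dyson term equals `(1/k!) (∫₀ᵗ H(s) ds)^k`. -/
theorem dysonTerm_eq_of_commute (n : ℕ) (H : ℝ → Matrix (Fin n) (Fin n) ℝ)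
    (hHcont : Continuous H)
    (hcomm : ∀ s s' : ℝ, H s * H s' = H s' * H s) :
    ∀ (k : ℕ) (t : ℝ),
      dysonTerm H k t = ((k.factorial : ℝ)⁻¹) • (∫ s in (0:ℝ)..t, H s) ^ k := by
  haveI : TopologicalSpace.PseudoMetrizableSpace (Matrix (Fin n) (Fin n) ℝ) :=
    inferInstanceAs (TopologicalSpace.PseudoMetrizableSpace (Fin n → Fin n → ℝ))
  set F : ℝ → Matrix (Fin n) (Fin n) ℝ := fun u => ∫ x in (0:ℝ)..u, H x with hFdef
  have hF : ∀ s : ℝ, HasDerivAt F (H s) s := fun s =>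
    intervalIntegral.integral_hasDerivAt_right (hHcont.intervalIntegrable _ _)
      (hHcont.stronglyMeasurableAtFilter _ _) hHcont.continuousAt
  have hFc : Continuous F := continuous_iff_continuousAt.mpr fun s => (hF s).continuousAt
  have hcom : ∀ s : ℝ, H s * F s = F s * H s := by
    intro s
    have h1 : (ContinuousLinearMap.mul ℝ (Matrix (Fin n) (Fin n) ℝ) (H s)) (F s)
        = ∫ x in (0:ℝ)..s, H s * H x :=
      ((ContinuousLinearMap.mul ℝ (Matrix (Fin n) (Fin n) ℝ) (H s)).intervalIntegral_comp_comm
        (hHcont.intervalIntegrable _ _)).symm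
    have h2 : ((ContinuousLinearMap.mul ℝ (Matrix (Fin n) (Fin n) ℝ)).flip (H s)) (F s)
        = ∫ x in (0:ℝ)..s, H x * H s :=
      (((ContinuousLinearMap.mul ℝ (Matrix (Fin n) (Fin n) ℝ)).flip (H s)).intervalIntegral_comp_comm
        (hHcont.intervalIntegrable _ _)).symm
    simp only [ContinuousLinearMap.mul_apply', ContinuousLinearMap.flip_apply] at h1 h2
    rw [h1, h2]
    exact intervalIntegral.integral_congr fun x _ => hcomm s x
  have hpow : ∀ (m : ℕ) (s : ℝ),
      HasDerivAt (fun u => F u ^ (m + 1)) ((m + 1 : ℕ) • (H s * F s ^ m)) s := by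
    intro m
    induction m with
    | zero => intro s; simpa using hF s
    | succ m ihm =>
      intro s
      have h := (hF s).mul (ihm s)
      have heq : (fun u => F u ^ (m + 1 + 1)) = fun u => F u * F u ^ (m + 1) := by
        funext u; rw [pow_succ']
      rw [heq]
      refine h.congr_deriv (Eq.symm ?_)
      rw [mul_smul_comm, ← mul_assoc, ← hcom s, mul_assoc, ← pow_succ']
      rw [succ_nsmul' (H s * F s ^ (m + 1)) (m + 1)]
  intro k
  induction k with
  | zero => intro t; simp [dysonTerm]
  | succ k ih =>
    intro t
    have hint : dysonTerm H (k + 1) t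
        = ∫ s in (0:ℝ)..t, ((k.factorial : ℝ)⁻¹) • (H s * F s ^ k) := by
      show (∫ s in (0:ℝ)..t, H s * dysonTerm H k s) = _
      refine intervalIntegral.integral_congr fun s _ => ?_
      rw [ih s, mul_smul_comm]
    rw [hint]
    have hderiv : ∀ s ∈ Set.uIcc (0:ℝ) t,
        HasDerivAt (fun u => (((k+1).factorial : ℝ)⁻¹) • F u ^ (k + 1))
          (((k.factorial : ℝ)⁻¹) • (H s * F s ^ k)) s := by
      intro s _
      have h := (hpow k s).const_smul (((k+1).factorial : ℝ)⁻¹)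
      refine h.congr_deriv (Eq.symm ?_)
      rw [Nat.cast_smul_eq_nsmul ℝ .. |>.symm, smul_smul]
      congr 1
      rw [Nat.factorial_succ]
      push_cast
      field_simp
    have hcont :=
      ((hHcont.mul (hFc.pow k)).const_smul ((k.factorial : ℝ)⁻¹)).intervalIntegrable (μ := MeasureTheory.volume) 0 t
    rw [intervalIntegral.integral_eq_sub_of_hasDerivAt hderiv hcont]
    have hF0 : F 0 = 0 := intervalIntegral.integral_same
    simp [hF0, zero_pow (Nat.succ_ne_zero k)]
    rfl
end

section
/- Let H : ℝ → Matrix (Fin n) (Fin n) ℝ be continuous and suppose H(s) * H(s') = H(s') * H(s) for all s, s' ∈ ℝ. Then the function U(t) := Matrix.exp (∫₀ᵗ H(s) ds) satisfies U(0) = 1 and, for every t, U is differentiable at t with derivative H(t) * U(t); that is, in the commuting case the propagator of the linear system equals the matrix exponential of the integral of H. -/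
attribute [local instance] Matrix.linftyOpNormedRing Matrix.linftyOpNormedAlgebra

open NormedSpace

/-- For a continuous matrix function commuting with itself at all times, the matrix
exponential of the integral `U(t) := exp (∫₀ᵗ H(s) ds)` is the propagator:
`U 0 = 1` and `U' (t) = H t * U t` for all `t`. -/
theorem exp_integral_isPropagator_of_commute (n : ℕ)
    (H : ℝ → Matrix (Fin n) (Fin n) ℝ)
    (hHcont : Continuous H)
    (hcomm : ∀ s s' : ℝ, H s * H s' = H s' * H s) :
    exp (∫ s in (0:ℝ)..(0:ℝ), H s) = 1 ∧
      ∀ t : ℝ, HasDerivAt (fun u : ℝ => exp (∫ s in (0:ℝ)..u, H s))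
        (H t * exp (∫ s in (0:ℝ)..t, H s)) t := by
  set A : ℝ → Matrix (Fin n) (Fin n) ℝ := fun u => ∫ s in (0:ℝ)..u, H s with hA
  have hint := fun a b : ℝ => hHcont.intervalIntegrable (μ := MeasureTheory.volume) a b
  -- any matrix commuting with all H s commutes with A u
  have hcommA : ∀ (M : Matrix (Fin n) (Fin n) ℝ),
      (∀ s : ℝ, Commute M (H s)) → ∀ u : ℝ, Commute M (A u) := by
    intro M hM u
    have hL := ContinuousLinearMap.intervalIntegral_comp_comm
      (ContinuousLinearMap.mul ℝ (Matrix (Fin n) (Fin n) ℝ) M) (hint 0 u)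
    have hR := ContinuousLinearMap.intervalIntegral_comp_comm
      ((ContinuousLinearMap.mul ℝ (Matrix (Fin n) (Fin n) ℝ)).flip M) (hint 0 u)
    simp only [ContinuousLinearMap.mul_apply', ContinuousLinearMap.flip_apply] at hL hR
    unfold Commute SemiconjBy
    rw [hA]
    rw [← hL, ← hR]
    congr 1
    ext s : 1
    exact hM s
  have hHA : ∀ t u : ℝ, Commute (H t) (A u) := fun t u => hcommA (H t) (fun s => hcomm t s) u
  have hAA : ∀ t u : ℝ, Commute (A t) (A u) := by
    intro t u
    exact ((hcommA (A u) (fun s => ((hHA s u).symm)) t).symm)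
  constructor
  · simp [intervalIntegral.integral_same, exp_zero]
  · intro t
    have hderivA : ∀ u : ℝ, HasDerivAt A (H u) u := fun u =>
      (hHcont.integral_hasStrictDerivAt 0 u).hasDerivAt
    -- B u := A u - A t
    set B : ℝ → Matrix (Fin n) (Fin n) ℝ := fun u => A u - A t with hB
    have hBt : B t = 0 := sub_self _
    have hderivB : HasDerivAt B (H t) t := by
      exact (hderivA t).sub_const (A t)
    have hexpB : HasDerivAt (fun u => exp (B u)) (H t) t := by
      have h0 : HasFDerivAt (exp) (1 : _ →L[ℝ] _) (B t) := by
        rw [hBt]; exact hasFDerivAt_exp_zero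
      have := h0.comp_hasDerivAt t hderivB
      exact this
    have hsplit : ∀ u : ℝ, exp (A u) = exp (A t) * exp (B u) := by
      intro u
      have hc : Commute (A t) (B u) := (hAA t u).sub_right (Commute.refl (A t))
      have : A u = A t + B u := by rw [hB]; ring_nf; abel
      rw [this, Matrix.exp_add_of_commute _ _ hc]
    have hfinal : HasDerivAt (fun u => exp (A t) * exp (B u)) (exp (A t) * H t) t :=
      hexpB.const_mul (exp (A t))
    have heq : (fun u : ℝ => exp (A u)) = fun u => exp (A t) * exp (B u) :=
      funext hsplit
    have hcommE : exp (A t) * H t = H t * exp (A t) :=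
      ((hHA t t).exp_right).symm.eq
    rw [show (fun u : ℝ => exp (∫ s in (0:ℝ)..u, H s)) = fun u => exp (A u) from rfl,
      heq]
    rw [show H t * exp (∫ s in (0:ℝ)..t, H s) = exp (A t) * H t from hcommE.symm]
    exact hfinal
end

section
/- Let g, ℓ, ω > 0, A ∈ ℝ, T := 2π/ω, and σ ∈ {1, −1}. Define α_σ(t) := σ * (A ω² cos(ω t) − g) / ℓ and H_σ(t) := !![0, 1; α_σ(t), 0]. Then the second-order Magnus term over one period vanishes: ∫₀ᵀ (∫₀^{t₁} H_σ(t₁) * H_σ(t₂) dt₂) dt₁ − (1/2) • (∫₀ᵀ H_σ(t) dt)² = 0. -/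
attribute [local instance] Matrix.linftyOpNormedRing Matrix.linftyOpNormedAlgebra

open MeasureTheory intervalIntegral

/-- Decompose a 2×2 matrix into scalar multiples of basis matrices. -/
lemma fin_two_decomp (w x y z : ℝ) :
    !![w, x; y, z] = w • (!![1,0;0,0] : Matrix (Fin 2) (Fin 2) ℝ) + x • !![0,1;0,0]
      + y • !![0,0;1,0] + z • !![0,0;0,1] := by
  simp only [Matrix.smul_of, Matrix.smul_cons, smul_eq_mul, Matrix.smul_empty, mul_one, mul_zero,
    Matrix.of_add_of, Matrix.add_cons, Matrix.head_cons, Matrix.tail_cons, Matrix.empty_add_empty,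
    add_zero, zero_add]

lemma intInt_smul_const {E : Type*} [NormedAddCommGroup E] [NormedSpace ℝ E] {f : ℝ → ℝ}
    {a b : ℝ} (h : IntervalIntegrable f MeasureTheory.volume a b) (c : E) :
    IntervalIntegrable (fun t => f t • c) MeasureTheory.volume a b :=
  ⟨h.1.smul_const c, h.2.smul_const c⟩

/-- Interval integral of a 2×2 matrix-valued function, entrywise. -/
lemma integral_fin_two {p q r s : ℝ → ℝ} {a b : ℝ}
    (hp : IntervalIntegrable p volume a b) (hq : IntervalIntegrable q volume a b)
    (hr : IntervalIntegrable r volume a b) (hs : IntervalIntegrable s volume a b) :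
    (∫ t in a..b, !![p t, q t; r t, s t]) =
      !![∫ t in a..b, p t, ∫ t in a..b, q t;
         ∫ t in a..b, r t, ∫ t in a..b, s t] := by
  rw [show (fun t => !![p t, q t; r t, s t]) = fun t =>
      p t • (!![1,0;0,0] : Matrix (Fin 2) (Fin 2) ℝ) + q t • !![0,1;0,0]
        + r t • !![0,0;1,0] + s t • !![0,0;0,1] from funext fun t => fin_two_decomp _ _ _ _]
  rw [integral_add (((intInt_smul_const hp _).add (intInt_smul_const hq _)).add (intInt_smul_const hr _))
      (intInt_smul_const hs _),
    integral_add ((intInt_smul_const hp _).add (intInt_smul_const hq _)) (intInt_smul_const hr _),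
    integral_add (intInt_smul_const hp _) (intInt_smul_const hq _),
    intervalIntegral.integral_smul_const, intervalIntegral.integral_smul_const,
    intervalIntegral.integral_smul_const, intervalIntegral.integral_smul_const,
    ← fin_two_decomp]

lemma integral_of_deriv {F f : ℝ → ℝ} {a b : ℝ} (hF : ∀ t, HasDerivAt F (f t) t)
    (hf : Continuous f) : ∫ t in a..b, f t = F b - F a :=
  integral_eq_sub_of_hasDerivAt (fun t _ => hF t) (hf.intervalIntegrable a b)

/-- The linearized Kapitza system matrix `H_σ(t) = !![0, 1; α_σ(t), 0]` with
`α_σ(t) = σ (A ω² cos(ω t) − g) / ℓ`. -/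
noncomputable def kapitzaH (g ℓ ω A σ : ℝ) (t : ℝ) : Matrix (Fin 2) (Fin 2) ℝ :=
  !![0, 1; σ * (A * ω ^ 2 * Real.cos (ω * t) - g) / ℓ, 0]

/-- The second Magnus term for Kapitza's pendulum over one period `T = 2π/ω` vanishes:
`Ω⁽²⁾(T) = U⁽²⁾(T) − (1/2)(Ω⁽¹⁾(T))² = 0`. -/
theorem kapitza_magnus_second_vanishes (g ℓ ω A σ : ℝ) (hg : 0 < g) (hℓ : 0 < ℓ)
    (hω : 0 < ω) (hσ : σ = 1 ∨ σ = -1) :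
    (∫ t₁ in (0:ℝ)..(2 * Real.pi / ω),
        ∫ t₂ in (0:ℝ)..t₁, kapitzaH g ℓ ω A σ t₁ * kapitzaH g ℓ ω A σ t₂) -
      (1 / 2 : ℝ) • (∫ t in (0:ℝ)..(2 * Real.pi / ω), kapitzaH g ℓ ω A σ t) ^ 2 = 0 := by
  have hω' : ω ≠ 0 := ne_of_gt hω
  have hℓ' : ℓ ≠ 0 := ne_of_gt hℓ
  set b : ℝ := 2 * Real.pi / ω with hb
  set α : ℝ → ℝ := fun t => σ * (A * ω ^ 2 * Real.cos (ω * t) - g) / ℓ with hα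
  have hαc : Continuous α := by fun_prop
  -- closed forms of the relevant scalar antiderivatives
  have hG : ∀ t, HasDerivAt (fun t => σ * (A * ω * Real.sin (ω * t) - g * t) / ℓ) (α t) t := by
    intro t
    have h1 : HasDerivAt (fun t : ℝ => Real.sin (ω * t)) (ω * Real.cos (ω * t)) t := by
      simpa [mul_comm, Function.comp_def] using (Real.hasDerivAt_sin (ω * t)).comp t ((hasDerivAt_id t).const_mul ω)
    have := (((h1.const_mul (A * ω)).sub ((hasDerivAt_id t).const_mul g)).const_mul σ).div_const ℓ
    refine this.congr_deriv ?_
    simp [hα]; ring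
  have hK : ∀ t, HasDerivAt (fun t => σ * (-A * Real.cos (ω * t) - g * t ^ 2 / 2) / ℓ)
      (σ * (A * ω * Real.sin (ω * t) - g * t) / ℓ) t := by
    intro t
    have h1 : HasDerivAt (fun t : ℝ => Real.cos (ω * t)) (-(ω * Real.sin (ω * t))) t := by
      simpa [mul_comm, Function.comp_def] using (Real.hasDerivAt_cos (ω * t)).comp t ((hasDerivAt_id t).const_mul ω)
    have h2 : HasDerivAt (fun t : ℝ => g * t ^ 2 / 2) (g * t) t := by
      have := ((hasDerivAt_pow 2 t).const_mul g).div_const 2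
      refine this.congr_deriv ?_; norm_num; ring
    have := (((h1.const_mul (-A)).sub h2).const_mul σ).div_const ℓ
    refine this.congr_deriv ?_; ring
  have hL : ∀ t, HasDerivAt
      (fun t => σ * (A * ω * t * Real.sin (ω * t) + A * Real.cos (ω * t) - g * t ^ 2 / 2) / ℓ)
      (t * α t) t := by
    intro t
    have h1 : HasDerivAt (fun t : ℝ => Real.sin (ω * t)) (ω * Real.cos (ω * t)) t := by
      simpa [mul_comm, Function.comp_def] using (Real.hasDerivAt_sin (ω * t)).comp t ((hasDerivAt_id t).const_mul ω)
    have h1' : HasDerivAt (fun t : ℝ => Real.cos (ω * t)) (-(ω * Real.sin (ω * t))) t := by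
      simpa [mul_comm, Function.comp_def] using (Real.hasDerivAt_cos (ω * t)).comp t ((hasDerivAt_id t).const_mul ω)
    have h2 : HasDerivAt (fun t : ℝ => A * ω * t) (A * ω) t := by
      simpa using (hasDerivAt_id t).const_mul (A * ω)
    have h3 : HasDerivAt (fun t : ℝ => g * t ^ 2 / 2) (g * t) t := by
      have := ((hasDerivAt_pow 2 t).const_mul g).div_const 2
      refine this.congr_deriv ?_; norm_num; ring
    have := ((((h2.mul h1).add (h1'.const_mul A)).sub h3).const_mul σ).div_const ℓ
    refine this.congr_deriv ?_
    simp [hα]; ring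
  have hsinb : Real.sin (ω * b) = 0 := by
    rw [hb, mul_div_assoc', mul_comm, mul_div_assoc, div_self hω', mul_one, Real.sin_two_pi]
  have hcosb : Real.cos (ω * b) = 1 := by
    rw [hb, mul_div_assoc', mul_comm, mul_div_assoc, div_self hω', mul_one, Real.cos_two_pi]
  -- the three scalar integrals
  have S1 : (∫ t in (0:ℝ)..b, α t) = -(σ * g * b) / ℓ := by
    rw [integral_of_deriv hG hαc]
    simp [hsinb]; ring
  have S2 : (∫ t in (0:ℝ)..b, σ * (A * ω * Real.sin (ω * t) - g * t) / ℓ)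
      = -(σ * g * b ^ 2 / 2) / ℓ := by
    rw [integral_of_deriv hK (by fun_prop)]
    simp [hcosb]; ring
  have S3 : (∫ t in (0:ℝ)..b, t * α t) = -(σ * g * b ^ 2 / 2) / ℓ := by
    rw [integral_of_deriv hL (by fun_prop)]
    simp [hsinb, hcosb]; ring
  -- inner matrix integral
  have inner : ∀ t₁ : ℝ, (∫ t₂ in (0:ℝ)..t₁, kapitzaH g ℓ ω A σ t₁ * kapitzaH g ℓ ω A σ t₂)
      = !![σ * (A * ω * Real.sin (ω * t₁) - g * t₁) / ℓ, 0; 0, t₁ * α t₁] := by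
    intro t₁
    have hmul : ∀ t₂ : ℝ, kapitzaH g ℓ ω A σ t₁ * kapitzaH g ℓ ω A σ t₂
        = !![α t₂, 0; 0, α t₁] := by
      intro t₂
      rw [kapitzaH, kapitzaH, Matrix.mul_fin_two]
      norm_num
      exact ⟨rfl, rfl⟩
    simp_rw [hmul]
    rw [integral_fin_two (hαc.intervalIntegrable 0 t₁)
        (intervalIntegrable_const) (intervalIntegrable_const) (intervalIntegrable_const)]
    simp only [intervalIntegral.integral_const, smul_eq_mul, mul_zero, sub_zero]
    rw [integral_of_deriv hG hαc]
    ext i j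
    fin_cases i <;> fin_cases j <;> simp [hα] <;> ring
  -- first Magnus term
  have hΩ1 : (∫ t in (0:ℝ)..b, kapitzaH g ℓ ω A σ t) = !![0, b; -(σ * g * b) / ℓ, 0] := by
    simp_rw [kapitzaH]
    rw [show (fun t => (!![0, 1; σ * (A * ω ^ 2 * Real.cos (ω * t) - g) / ℓ, 0]
        : Matrix (Fin 2) (Fin 2) ℝ)) = fun t => !![(0:ℝ), 1; α t, 0] from rfl,
      integral_fin_two intervalIntegrable_const intervalIntegrable_const
        (hαc.intervalIntegrable 0 b) intervalIntegrable_const, S1]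
    simp
  simp_rw [inner]
  rw [integral_fin_two (Continuous.intervalIntegrable (by fun_prop) 0 b)
      intervalIntegrable_const intervalIntegrable_const
      (Continuous.intervalIntegrable (by fun_prop) 0 b), hΩ1, pow_two,
      Matrix.mul_fin_two, S2, S3]
  ext i j
  fin_cases i <;> fin_cases j <;>
    simp [Matrix.sub_apply, Matrix.smul_apply] <;> ring
end

section
/- Let g, ℓ, ω > 0, A ∈ ℝ, T := 2π/ω, and σ ∈ {1, −1}. Define α_σ(t) := σ * (A ω² cos(ω t) − g) / ℓ and H_σ(t) := !![0, 1; α_σ(t), 0]. Then the third Dyson term over one period equals U⁽³⁾(T) := ∫₀ᵀ ∫₀^{t₁} ∫₀^{t₂} H_σ(t₁) * H_σ(t₂) * H_σ(t₃) dt₃ dt₂ dt₁ = !![0, −σ (g T³/(6ℓ) + 2 A T/ℓ); −A² ω² T/(2 ℓ²) − 2 A g T/ℓ² + g² T³/(6 ℓ²), 0]. -/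
attribute [local instance] Matrix.linftyOpNormedRing Matrix.linftyOpNormedAlgebra

open MeasureTheory Real

lemma hd_sin (ω t : ℝ) : HasDerivAt (fun s : ℝ => Real.sin (ω * s)) (ω * Real.cos (ω * t)) t := by
  simpa [mul_comm, Function.comp_def] using (Real.hasDerivAt_sin (ω * t)).comp t ((hasDerivAt_id t).const_mul ω)

lemma hd_cos (ω t : ℝ) : HasDerivAt (fun s : ℝ => Real.cos (ω * s)) (-(ω * Real.sin (ω * t))) t := by
  simpa [mul_comm, Function.comp_def] using (Real.hasDerivAt_cos (ω * t)).comp t ((hasDerivAt_id t).const_mul ω)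

lemma triple_mul (x y z : ℝ) : (!![0,1;x,0] : Matrix (Fin 2) (Fin 2) ℝ) * !![0,1;y,0] * !![0,1;z,0] = !![0, y; x*z, 0] := by
  rw [Matrix.mul_fin_two, Matrix.mul_fin_two]; norm_num

lemma II_smul_const {f : ℝ → ℝ} {x y : ℝ} (h : IntervalIntegrable f volume x y)
    (M : Matrix (Fin 2) (Fin 2) ℝ) : @IntervalIntegrable _ UniformSpace.toTopologicalSpace NormedAddGroup.toENormedAddMonoid (fun t => f t • M) volume x y :=
  ⟨h.1.smul_const M, h.2.smul_const M⟩

lemma integral_mat2 (x y : ℝ) (b c : ℝ → ℝ)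
    (hb : IntervalIntegrable b volume x y) (hc : IntervalIntegrable c volume x y) :
    (∫ t in x..y, !![(0:ℝ), b t; c t, 0]) =
      !![0, ∫ t in x..y, b t; ∫ t in x..y, c t, 0] := by
  have hdecomp : ∀ p q : ℝ, !![(0:ℝ), p; q, 0] =
      p • !![(0:ℝ),1;0,0] + q • !![(0:ℝ),0;1,0] := by
    intro p q; ext i j; fin_cases i <;> fin_cases j <;> simp [Matrix.smul_apply, Matrix.add_apply]
  rw [intervalIntegral.integral_congr
        (g := fun t => b t • !![(0:ℝ),1;0,0] + c t • !![(0:ℝ),0;1,0])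
        (fun t _ => hdecomp (b t) (c t)),
      intervalIntegral.integral_add (II_smul_const hb _) (II_smul_const hc _),
      intervalIntegral.integral_smul_const, intervalIntegral.integral_smul_const,
      ← hdecomp]

lemma kint1 (σ A ω g ℓ x : ℝ) :
    ∫ s in (0:ℝ)..x, σ * (A * ω ^ 2 * Real.cos (ω * s) - g) / ℓ
      = σ * (A * ω * Real.sin (ω * x) - g * x) / ℓ := by
  have key : ∀ t ∈ Set.uIcc (0:ℝ) x,
      HasDerivAt (fun s => σ * (A * ω * Real.sin (ω * s) - g * s) / ℓ)
        (σ * (A * ω ^ 2 * Real.cos (ω * t) - g) / ℓ) t := by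
    intro t _
    have h := ((((hd_sin ω t).const_mul (A * ω)).sub
        ((hasDerivAt_id t).const_mul g)).const_mul σ).div_const ℓ
    refine h.congr_deriv ?_
    ring
  rw [intervalIntegral.integral_eq_sub_of_hasDerivAt key
      ((Continuous.intervalIntegrable (by fun_prop) 0 x))]
  simp

lemma kint2 (σ A ω g ℓ x : ℝ) :
    ∫ s in (0:ℝ)..x, σ * (A * ω ^ 2 * Real.cos (ω * s) - g) / ℓ * s
      = σ * (A * ω * x * Real.sin (ω * x) + A * Real.cos (ω * x) - A - g * x ^ 2 / 2) / ℓ := by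
  have key : ∀ t ∈ Set.uIcc (0:ℝ) x,
      HasDerivAt (fun s => σ * (A * ω * s * Real.sin (ω * s) + A * Real.cos (ω * s) - A - g * s ^ 2 / 2) / ℓ)
        (σ * (A * ω ^ 2 * Real.cos (ω * t) - g) / ℓ * t) t := by
    intro t _
    have h := ((((((hasDerivAt_id t).const_mul (A * ω)).mul (hd_sin ω t)).add
        ((hd_cos ω t).const_mul A)).sub_const A).sub
        (((hasDerivAt_pow 2 t).const_mul g).div_const 2)).const_mul σ |>.div_const ℓ
    refine h.congr_deriv ?_
    try simp only [id_eq]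
    push_cast
    ring
  rw [intervalIntegral.integral_eq_sub_of_hasDerivAt key
      ((Continuous.intervalIntegrable (by fun_prop) 0 x))]
  simp

lemma kint3 (σ A ω g ℓ x : ℝ) :
    ∫ s in (0:ℝ)..x, σ * (A * ω * Real.sin (ω * s) - g * s) / ℓ
      = σ * (A - A * Real.cos (ω * x) - g * x ^ 2 / 2) / ℓ := by
  have key : ∀ t ∈ Set.uIcc (0:ℝ) x,
      HasDerivAt (fun s => σ * (A - A * Real.cos (ω * s) - g * s ^ 2 / 2) / ℓ)
        (σ * (A * ω * Real.sin (ω * t) - g * t) / ℓ) t := by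
    intro t _
    have h := ((((hasDerivAt_const t A).sub ((hd_cos ω t).const_mul A)).sub
        (((hasDerivAt_pow 2 t).const_mul g).div_const 2)).const_mul σ).div_const ℓ
    refine h.congr_deriv ?_
    try simp only [id_eq]
    push_cast
    ring
  rw [intervalIntegral.integral_eq_sub_of_hasDerivAt key
      ((Continuous.intervalIntegrable (by fun_prop) 0 x))]
  simp

lemma kint4 (σ A ω g ℓ x : ℝ) (hω : ω ≠ 0) :
    ∫ s in (0:ℝ)..x, σ * (A * ω * s * Real.sin (ω * s) + A * Real.cos (ω * s) - A - g * s ^ 2 / 2) / ℓ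
      = σ * (-(A * x * Real.cos (ω * x)) + 2 * A * Real.sin (ω * x) / ω - A * x - g * x ^ 3 / 6) / ℓ := by
  have key : ∀ t ∈ Set.uIcc (0:ℝ) x,
      HasDerivAt (fun s => σ * (-(A * s * Real.cos (ω * s)) + 2 * A * Real.sin (ω * s) / ω - A * s - g * s ^ 3 / 6) / ℓ)
        (σ * (A * ω * t * Real.sin (ω * t) + A * Real.cos (ω * t) - A - g * t ^ 2 / 2) / ℓ) t := by
    intro t _
    have e1 := (((hasDerivAt_id t).const_mul A).mul (hd_cos ω t)).neg
    have e2 : HasDerivAt (fun s : ℝ => 2 * A * Real.sin (ω * s) / ω) (2 * A * Real.cos (ω * t)) t := by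
      have := ((hd_sin ω t).const_mul (2 * A)).div_const ω
      rwa [mul_div_assoc, mul_div_cancel_left₀ _ hω] at this
    have e3 := (hasDerivAt_id t).const_mul A
    have e4 := ((hasDerivAt_pow 3 t).const_mul g).div_const 6
    have h := ((((e1.add e2).sub e3).sub e4).const_mul σ).div_const ℓ
    refine h.congr_deriv ?_
    try simp only [id_eq]
    push_cast
    ring
  rw [intervalIntegral.integral_eq_sub_of_hasDerivAt key
      ((Continuous.intervalIntegrable (by fun_prop) 0 x))]
  simp

lemma kint5 (A ω g ℓ x : ℝ) (hω : ω ≠ 0) :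
    ∫ s in (0:ℝ)..x, (A * ω ^ 2 * Real.cos (ω * s) - g) * (A - A * Real.cos (ω * s) - g * s ^ 2 / 2) / ℓ ^ 2
      = (A ^ 2 * ω * Real.sin (ω * x) - A ^ 2 * ω ^ 2 * x / 2 - A ^ 2 * ω * Real.sin (2 * ω * x) / 4
          - A * g / 2 * (ω * x ^ 2 * Real.sin (ω * x) + 2 * x * Real.cos (ω * x) - 2 * Real.sin (ω * x) / ω)
          - A * g * x + A * g * Real.sin (ω * x) / ω + g ^ 2 * x ^ 3 / 6) / ℓ ^ 2 := by
  have key : ∀ t ∈ Set.uIcc (0:ℝ) x,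
      HasDerivAt (fun s => (A ^ 2 * ω * Real.sin (ω * s) - A ^ 2 * ω ^ 2 * s / 2 - A ^ 2 * ω * Real.sin (2 * ω * s) / 4
          - A * g / 2 * (ω * s ^ 2 * Real.sin (ω * s) + 2 * s * Real.cos (ω * s) - 2 * Real.sin (ω * s) / ω)
          - A * g * s + A * g * Real.sin (ω * s) / ω + g ^ 2 * s ^ 3 / 6) / ℓ ^ 2)
        ((A * ω ^ 2 * Real.cos (ω * t) - g) * (A - A * Real.cos (ω * t) - g * t ^ 2 / 2) / ℓ ^ 2) t := by
    intro t _
    have h4a : HasDerivAt (fun s : ℝ => 2 * Real.sin (ω * s) / ω) (2 * Real.cos (ω * t)) t := by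
      have := ((hd_sin ω t).const_mul 2).div_const ω
      rwa [mul_div_assoc, mul_div_cancel_left₀ _ hω] at this
    have h4 := ((((hasDerivAt_pow 2 t).const_mul ω).mul (hd_sin ω t)).add
        (((hasDerivAt_id t).const_mul 2).mul (hd_cos ω t))).sub h4a
    have e1 := (hd_sin ω t).const_mul (A ^ 2 * ω)
    have e2 := ((hasDerivAt_id t).const_mul (A ^ 2 * ω ^ 2)).div_const 2
    have e3 := ((hd_sin (2 * ω) t).const_mul (A ^ 2 * ω)).div_const 4
    have e4 := h4.const_mul (A * g / 2)
    have e5 := (hasDerivAt_id t).const_mul (A * g)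
    have e6 : HasDerivAt (fun s : ℝ => A * g * Real.sin (ω * s) / ω) (A * g * Real.cos (ω * t)) t := by
      have := ((hd_sin ω t).const_mul (A * g)).div_const ω
      rwa [mul_div_assoc, mul_div_cancel_left₀ _ hω] at this
    have e7 := ((hasDerivAt_pow 3 t).const_mul (g ^ 2)).div_const 6
    have h := (((((((e1.sub e2).sub e3).sub e4).sub e5).add e6).add e7).div_const (ℓ ^ 2))
    refine h.congr_deriv ?_
    rw [show (2:ℝ) * ω * t = 2 * (ω * t) by ring, Real.cos_two_mul]
    try simp only [id_eq]
    push_cast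
    ring
  rw [intervalIntegral.integral_eq_sub_of_hasDerivAt key
      ((Continuous.intervalIntegrable (by fun_prop) 0 x))]
  simp


lemma mat_eq (X Y X' Y' : ℝ) (h1 : X = X') (h2 : Y = Y') :
    (!![0, X; Y, 0] : Matrix (Fin 2) (Fin 2) ℝ) = !![0, X'; Y', 0] := by rw [h1, h2]

/-- The third Dyson term for Kapitza's pendulum over one period `T = 2π/ω`:
`U⁽³⁾(T) = !![0, −σ(gT³/(6ℓ) + 2AT/ℓ); −A²ω²T/(2ℓ²) − 2AgT/ℓ² + g²T³/(6ℓ²), 0]`. -/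
theorem kapitza_dyson_third (g ℓ ω A σ : ℝ) (hg : 0 < g) (hℓ : 0 < ℓ) (hω : 0 < ω)
    (hσ : σ = 1 ∨ σ = -1) :
    (∫ t₁ in (0:ℝ)..(2 * Real.pi / ω), ∫ t₂ in (0:ℝ)..t₁, ∫ t₃ in (0:ℝ)..t₂,
        kapitzaH g ℓ ω A σ t₁ * kapitzaH g ℓ ω A σ t₂ * kapitzaH g ℓ ω A σ t₃) =
      !![0, -σ * (g * (2 * Real.pi / ω) ^ 3 / (6 * ℓ) + 2 * A * (2 * Real.pi / ω) / ℓ);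
         -A ^ 2 * ω ^ 2 * (2 * Real.pi / ω) / (2 * ℓ ^ 2) -
             2 * A * g * (2 * Real.pi / ω) / ℓ ^ 2 +
             g ^ 2 * (2 * Real.pi / ω) ^ 3 / (6 * ℓ ^ 2), 0] := by
  have hωne : ω ≠ 0 := hω.ne'
  have hℓne : ℓ ≠ 0 := hℓ.ne'
  have hσ2 : σ * σ = 1 := by rcases hσ with h | h <;> rw [h] <;> norm_num
  -- Step 1: the innermost integral.
  have inner : ∀ t₁ t₂ : ℝ,
      (∫ t₃ in (0:ℝ)..t₂,
          kapitzaH g ℓ ω A σ t₁ * kapitzaH g ℓ ω A σ t₂ * kapitzaH g ℓ ω A σ t₃)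
        = !![0, σ * (A * ω ^ 2 * Real.cos (ω * t₂) - g) / ℓ * t₂;
             σ * (A * ω ^ 2 * Real.cos (ω * t₁) - g) / ℓ *
               (σ * (A * ω * Real.sin (ω * t₂) - g * t₂) / ℓ), 0] := by
    intro t₁ t₂
    simp only [kapitzaH, triple_mul]
    rw [integral_mat2 _ _ _ _ intervalIntegrable_const
        (Continuous.intervalIntegrable (by fun_prop) _ _),
      intervalIntegral.integral_const, intervalIntegral.integral_const_mul, kint1]
    ext i j
    fin_cases i <;> fin_cases j <;>
      simp [Matrix.cons_val_zero, Matrix.cons_val_one, Matrix.head_cons, smul_eq_mul] <;> ring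
  -- Step 2: the middle integral.
  have middle : ∀ t₁ : ℝ,
      (∫ t₂ in (0:ℝ)..t₁, ∫ t₃ in (0:ℝ)..t₂,
          kapitzaH g ℓ ω A σ t₁ * kapitzaH g ℓ ω A σ t₂ * kapitzaH g ℓ ω A σ t₃)
        = !![0, σ * (A * ω * t₁ * Real.sin (ω * t₁) + A * Real.cos (ω * t₁) - A
                - g * t₁ ^ 2 / 2) / ℓ;
             σ * (A * ω ^ 2 * Real.cos (ω * t₁) - g) / ℓ *
               (σ * (A - A * Real.cos (ω * t₁) - g * t₁ ^ 2 / 2) / ℓ), 0] := by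
    intro t₁
    rw [intervalIntegral.integral_congr (fun t _ => inner t₁ t),
      integral_mat2 _ _ _ _ (Continuous.intervalIntegrable (by fun_prop) _ _)
        (Continuous.intervalIntegrable (by fun_prop) _ _),
      kint2, intervalIntegral.integral_const_mul, kint3]
  -- Step 3: the outer integral.
  rw [intervalIntegral.integral_congr (fun t _ => middle t),
    integral_mat2 _ _ _ _ (Continuous.intervalIntegrable (by fun_prop) _ _)
      (Continuous.intervalIntegrable (by fun_prop) _ _),
    kint4 σ A ω g ℓ _ hωne,
    intervalIntegral.integral_congr (g := fun t => (A * ω ^ 2 * Real.cos (ω * t) - g) *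
      (A - A * Real.cos (ω * t) - g * t ^ 2 / 2) / ℓ ^ 2)
      (fun t _ => by
        rw [div_mul_div_comm,
          show σ * (A * ω ^ 2 * Real.cos (ω * t) - g) * (σ * (A - A * Real.cos (ω * t) - g * t ^ 2 / 2))
            = σ * σ * ((A * ω ^ 2 * Real.cos (ω * t) - g) * (A - A * Real.cos (ω * t) - g * t ^ 2 / 2)) by ring,
          hσ2, one_mul]
        ring),
    kint5 A ω g ℓ _ hωne]
  -- Step 4: evaluate at T = 2π/ω.
  have h1 : ω * (2 * Real.pi / ω) = 2 * Real.pi := by field_simp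
  have hs : Real.sin (ω * (2 * Real.pi / ω)) = 0 := by rw [h1, Real.sin_two_pi]
  have hc : Real.cos (ω * (2 * Real.pi / ω)) = 1 := by rw [h1, Real.cos_two_pi]
  have hs2 : Real.sin (2 * ω * (2 * Real.pi / ω)) = 0 := by
    rw [mul_assoc, h1, show (2:ℝ) * (2 * Real.pi) = 2 * Real.pi + 2 * Real.pi by ring,
      Real.sin_add, Real.sin_two_pi, Real.cos_two_pi]
    ring
  rw [hs, hc, hs2]
  exact mat_eq _ _ _ _ (by field_simp; ring) (by field_simp; ring)
end
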